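/- Let f be a convex function on ℝ^N, let w ∈ ℝ^N and r > 0, and suppose f is γ-strongly convex on the closed ball B(w, r) for some γ > 0. Assume f(w) ≤ min_{x ∈ B(w,r)} f(x) + ε for some ε ≤ r²γ/8. Then f admits a unique minimizer x⋆ over ℝ^N; x⋆ ∈ B(w, r) and ‖x⋆ − w‖² ≤ (2/γ)ε. Moreover, every x ∈ ℝ^N with f(x) ≤ min f + ε satisfies ‖x − w‖² ≤ (8/γ)ε. -/

import Mathlib

set_option maxHeartbeats 1000000

noncomputable section

/-- Lemma (local strong convexity pins down the minimizer): if a convex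
function f on ℝ^N is γ-strongly convex on the closed ball B(w, r) — that is,
x ↦ f(x) − (γ/2)‖x‖² is convex on B(w, r) — and w nearly minimizes f on
B(w, r), then f has a unique global minimizer x⋆, which lies in B(w, r) with
‖x⋆ − w‖² ≤ (2/γ)ε, and every ε-approximate global minimizer x satisfies
‖x − w‖² ≤ (8/γ)ε. -/
theorem stmt19 (N : ℕ) (f : EuclideanSpace ℝ (Fin N) → ℝ)
    (hf : ConvexOn ℝ Set.univ f)
    (w : EuclideanSpace ℝ (Fin N)) (r γ ε : ℝ) (hr : 0 < r) (hγ : 0 < γ)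
    (hsc : ConvexOn ℝ (Metric.closedBall w r) (fun x => f x - γ / 2 * ‖x‖ ^ 2))
    (hε : ε ≤ r ^ 2 * γ / 8)
    (hmin : f w ≤ sInf (f '' Metric.closedBall w r) + ε) :
    ∃ xstar : EuclideanSpace ℝ (Fin N),
      IsMinOn f Set.univ xstar ∧
      (∀ y, IsMinOn f Set.univ y → y = xstar) ∧
      xstar ∈ Metric.closedBall w r ∧
      ‖xstar - w‖ ^ 2 ≤ (2 / γ) * ε ∧
      ∀ x, f x ≤ f xstar + ε → ‖x - w‖ ^ 2 ≤ (8 / γ) * ε := by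
  classical
  set B := Metric.closedBall w r with hBdef
  have hwB : w ∈ B := Metric.mem_closedBall_self hr.le
  have hBconv : Convex ℝ B := convex_closedBall w r
  have hsc' : StrongConvexOn B γ f := strongConvexOn_iff_convex.mpr hsc
  have hcont : ContinuousOn f B := (hf.continuousOn isOpen_univ).mono (Set.subset_univ B)
  have hcpt : IsCompact B := isCompact_closedBall w r
  obtain ⟨z, hzB, hzmin⟩ := hcpt.exists_isMinOn ⟨w, hwB⟩ hcont
  have hL : IsLeast (f '' B) (f z) :=
    ⟨⟨z, hzB, rfl⟩, by rintro _ ⟨y, hyB, rfl⟩; exact hzmin hyB⟩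
  have hsInf : sInf (f '' B) = f z := hL.csInf_eq
  have hfw : f w ≤ f z + ε := by rwa [hsInf] at hmin
  have hzw : f z ≤ f w := hzmin hwB
  have hε0 : 0 ≤ ε := by linarith
  -- key strong-convexity lower bound on the ball
  have key : ∀ y ∈ B, f z + γ / 2 * ‖y - z‖ ^ 2 ≤ f y := by
    intro y hy
    have h1 : ∀ t : ℝ, t ∈ Set.Ioo (0 : ℝ) 1 →
        γ / 2 * ((1 - t) * ‖y - z‖ ^ 2) ≤ f y - f z := by
      intro t ht
      have h2 := hsc'.2 hy hzB ht.1.le (by linarith [ht.2] : (0:ℝ) ≤ 1 - t) (by ring)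
      have h3 : f z ≤ f (t • y + (1 - t) • z) :=
        hzmin (hBconv hy hzB ht.1.le (by linarith [ht.2]) (by ring))
      rw [smul_eq_mul, smul_eq_mul] at h2
      have ht0 := ht.1
      nlinarith [sq_nonneg ‖y - z‖]
    have hten : Filter.Tendsto (fun t : ℝ => γ / 2 * ((1 - t) * ‖y - z‖ ^ 2))
        (nhdsWithin 0 (Set.Ioi 0)) (nhds (γ / 2 * ((1 - 0) * ‖y - z‖ ^ 2))) := by
      apply Filter.Tendsto.mono_left _ nhdsWithin_le_nhds
      exact (Continuous.tendsto (by continuity) 0)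
    have hev : ∀ᶠ t in nhdsWithin (0:ℝ) (Set.Ioi 0),
        γ / 2 * ((1 - t) * ‖y - z‖ ^ 2) ≤ f y - f z :=
      Filter.eventually_of_mem (Ioo_mem_nhdsGT_of_mem ⟨le_refl 0, one_pos⟩) h1
    have hlim := le_of_tendsto hten hev
    simp only [sub_zero, one_mul] at hlim
    linarith
  -- the minimizer is well inside the ball
  have hzw2 : γ / 2 * ‖w - z‖ ^ 2 ≤ ε := by have := key w hwB; linarith
  have hzwr : ‖w - z‖ ≤ r / 2 := by
    have ha2 : ‖w - z‖ ^ 2 ≤ (r / 2) ^ 2 := by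
      have h1 : γ / 2 * ‖w - z‖ ^ 2 ≤ γ / 2 * ((r / 2) ^ 2) := by nlinarith
      exact le_of_mul_le_mul_left (by linarith) (half_pos hγ)
    exact le_of_pow_le_pow_left₀ (by norm_num) (by linarith) ha2
  -- z is a global minimizer
  have hBnhds : B ∈ nhds z := by
    refine Filter.mem_of_superset (Metric.isOpen_ball.mem_nhds ?_) Metric.ball_subset_closedBall
    rw [Metric.mem_ball, dist_eq_norm, norm_sub_rev]
    linarith
  have hlocal : IsLocalMin f z := Filter.eventually_of_mem hBnhds fun x hx => hzmin hx
  have hglob : ∀ x, f z ≤ f x := IsMinOn.of_isLocalMin_of_convex_univ hlocal hf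
  have hzminuniv : IsMinOn f Set.univ z := isMinOn_iff.mpr fun x _ => hglob x
  -- approximate minimizers are near w
  have happrox : ∀ x, f x ≤ f z + ε → ‖x - w‖ ^ 2 ≤ 8 / γ * ε := by
    intro x hx
    have hxz : ‖x - z‖ ≤ r / 2 := by
      by_contra hc
      push_neg at hc
      have hxz0 : (0:ℝ) < ‖x - z‖ := lt_trans (by linarith) hc
      set s : ℝ := (r / 2) / ‖x - z‖ with hs
      have hs0 : 0 < s := div_pos (by linarith) hxz0
      have hs1 : s < 1 := (div_lt_one hxz0).mpr hc
      set x' : EuclideanSpace ℝ (Fin N) := (1 - s) • z + s • x with hx'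
      have hx'z : x' - z = s • (x - z) := by rw [hx']; module
      have hx'zn : ‖x' - z‖ = r / 2 := by
        rw [hx'z, norm_smul, Real.norm_of_nonneg hs0.le, hs]
        field_simp
      have hx'B : x' ∈ B := by
        rw [hBdef, Metric.mem_closedBall, dist_eq_norm]
        calc ‖x' - w‖ = ‖(x' - z) + (z - w)‖ := by rw [sub_add_sub_cancel]
          _ ≤ ‖x' - z‖ + ‖z - w‖ := norm_add_le _ _
          _ ≤ r / 2 + r / 2 := by
              rw [hx'zn, norm_sub_rev]; linarith
          _ = r := by ring
      have hcx : f x' ≤ (1 - s) * f z + s * f x := by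
        have := hf.2 (Set.mem_univ z) (Set.mem_univ x) (by linarith : (0:ℝ) ≤ 1 - s)
          hs0.le (by ring)
        simpa [smul_eq_mul] using this
      have hkey := key x' hx'B
      rw [hx'zn] at hkey
      have hB1 : s * (f x - f z) ≤ s * ε :=
        mul_le_mul_of_nonneg_left (by linarith) hs0.le
      have hC1 : s * ε ≤ s * (r ^ 2 * γ / 8) := mul_le_mul_of_nonneg_left hε hs0.le
      have hD1 : s * (r ^ 2 * γ / 8) < 1 * (r ^ 2 * γ / 8) :=
        mul_lt_mul_of_pos_right hs1 (by positivity)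
      nlinarith
    have hxB : x ∈ B := by
      rw [hBdef, Metric.mem_closedBall, dist_eq_norm]
      calc ‖x - w‖ = ‖(x - z) + (z - w)‖ := by rw [sub_add_sub_cancel]
        _ ≤ ‖x - z‖ + ‖z - w‖ := norm_add_le _ _
        _ ≤ r / 2 + r / 2 := by rw [norm_sub_rev z w]; exact add_le_add hxz hzwr
        _ = r := by ring
    have hkx := key x hxB
    have htri : ‖x - w‖ ≤ ‖x - z‖ + ‖w - z‖ := by
      calc ‖x - w‖ = ‖(x - z) + (z - w)‖ := by rw [sub_add_sub_cancel]
        _ ≤ ‖x - z‖ + ‖z - w‖ := norm_add_le _ _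
        _ = ‖x - z‖ + ‖w - z‖ := by rw [norm_sub_rev z w]
    rw [div_mul_eq_mul_div, le_div_iff₀ hγ]
    have h1 : ‖x - w‖ ^ 2 ≤ (‖x - z‖ + ‖w - z‖) ^ 2 :=
      pow_le_pow_left₀ (norm_nonneg _) htri 2
    have h3 : (‖x - z‖ + ‖w - z‖) ^ 2 ≤ 2 * ‖x - z‖ ^ 2 + 2 * ‖w - z‖ ^ 2 := by
      nlinarith [sq_nonneg (‖x - z‖ - ‖w - z‖)]
    have h4 : γ * ‖x - w‖ ^ 2 ≤ γ * (2 * ‖x - z‖ ^ 2 + 2 * ‖w - z‖ ^ 2) :=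
      mul_le_mul_of_nonneg_left (h1.trans h3) hγ.le
    nlinarith
  refine ⟨z, hzminuniv, ?_, ?_, ?_, ?_⟩
  · -- uniqueness
    intro y hy
    have hfy : f y ≤ f z + ε := by
      have := isMinOn_iff.mp hy z (Set.mem_univ z)
      linarith
    have hyB : y ∈ B := by
      rw [hBdef, Metric.mem_closedBall, dist_eq_norm]
      have h1 := happrox y hfy
      have h2 : 8 / γ * ε ≤ r ^ 2 := by
        rw [div_mul_eq_mul_div, div_le_iff₀ hγ]
        nlinarith
      nlinarith [norm_nonneg (y - w)]
    exact (hsc'.strictConvexOn hγ).eq_of_isMinOn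
      (isMinOn_iff.mpr fun u _ => hy (Set.mem_univ u)) hzmin hyB hzB
  · exact hzB
  · rw [div_mul_eq_mul_div, le_div_iff₀ hγ]
    have := key w hwB
    rw [norm_sub_rev]
    nlinarith
  · exact happrox
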